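/- Let A and B be non-negative contractions on a Hilbert space and t ∈ (0,1). Equality λ₁(A ⋆_t B) = t·λ₁(A) + (1−t)·λ₁(B) holds if and only if there exists a unit vector φ with Aφ = λ₁(A)·φ and Bφ = λ₁(B)·φ, where A ⋆_t B = t·A + (1−t)·B + i·√(t(1−t))·[A,B]. -/

import Mathlib

set_option maxHeartbeats 1000000

open Matrix ComplexOrder

/-- Eigenvalues of a Hermitian matrix listed in non-increasing order:
`eigDesc hA j` is the `j`-th largest eigenvalue of `A`. -/
noncomputable def eigDesc {n : ℕ} {A : Matrix (Fin n) (Fin n) ℂ} (hA : A.IsHermitian) :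
    Fin n → ℝ :=
  fun j => hA.eigenvalues (Tuple.sort hA.eigenvalues (Fin.rev j))

/-- The partial-swap convolution `A ⋆_t B = tA + (1-t)B + i√(t(1-t))[A,B]`. -/
noncomputable def pswap {n : ℕ} (t : ℝ) (A B : Matrix (Fin n) (Fin n) ℂ) :
    Matrix (Fin n) (Fin n) ℂ :=
  (t : ℂ) • A + ((1 - t : ℝ) : ℂ) • B
    + (Complex.I * (Real.sqrt (t * (1 - t)) : ℂ)) • (A * B - B * A)


variable {n : ℕ}

lemma dot_self_re (u : Fin n → ℂ) : (star u ⬝ᵥ u).re = ∑ i, ‖u i‖^2 := by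
  simp [dotProduct, Complex.re_sum, Complex.mul_re, Complex.sq_norm,
    Complex.normSq_apply]

lemma dot_self_eq (u : Fin n → ℂ) : star u ⬝ᵥ u = (((∑ i, ‖u i‖^2 : ℝ)) : ℂ) := by
  simp only [dotProduct, Pi.star_apply, Complex.star_def]
  push_cast
  congr 1
  funext i
  rw [Complex.conj_mul']

lemma conj_dot (u v : Fin n → ℂ) : star (star u ⬝ᵥ v) = star v ⬝ᵥ u := by
  rw [Matrix.star_dotProduct]
  simp

lemma cs_dot (u v : Fin n → ℂ) :
    ‖star u ⬝ᵥ v‖ ≤ Real.sqrt ((star u ⬝ᵥ u).re) * Real.sqrt ((star v ⬝ᵥ v).re) := by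
  have h1 : star u ⬝ᵥ v = (inner ℂ ((WithLp.equiv 2 _).symm u) ((WithLp.equiv 2 _).symm v) : ℂ) := by
    simp [dotProduct, PiLp.inner_apply, RCLike.inner_apply, mul_comm]
  have h2 : ∀ w : Fin n → ℂ, ‖(WithLp.equiv 2 (Fin n → ℂ)).symm w‖ = Real.sqrt ((star w ⬝ᵥ w).re) := by
    intro w
    rw [EuclideanSpace.norm_eq, dot_self_re]
    rfl
  rw [h1, ← h2, ← h2]
  exact norm_inner_le_norm _ _

lemma herm_dot {M : Matrix (Fin n) (Fin n) ℂ} (hM : M.IsHermitian) (x y : Fin n → ℂ) :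
    star x ⬝ᵥ (M *ᵥ y) = star (M *ᵥ x) ⬝ᵥ y := by
  rw [Matrix.star_mulVec, hM.eq, Matrix.dotProduct_mulVec]

lemma psd_dot {M : Matrix (Fin n) (Fin n) ℂ} (hM : M.PosSemidef) (x : Fin n → ℂ) :
    star x ⬝ᵥ (M *ᵥ x) = (((star x ⬝ᵥ (M *ᵥ x)).re : ℝ) : ℂ) ∧ 0 ≤ (star x ⬝ᵥ (M *ᵥ x)).re := by
  have h := hM.dotProduct_mulVec_nonneg x
  rw [Complex.le_def] at h
  constructor
  · exact (Complex.ext (by simp) (by simp [← h.2])).symm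
  · simpa using h.1

variable [NeZero n]

lemma eig_le_eigDesc {M : Matrix (Fin n) (Fin n) ℂ} (hM : M.IsHermitian) (i : Fin n) :
    hM.eigenvalues i ≤ eigDesc hM 0 := by
  obtain ⟨j, rfl⟩ := (Tuple.sort hM.eigenvalues).surjective i
  have hle : j ≤ Fin.rev 0 := by
    simp only [Fin.le_def, Fin.val_rev, Fin.val_zero]
    have h1 := j.isLt
    have h2 := NeZero.one_le (n := n)
    omega
  exact Tuple.monotone_sort hM.eigenvalues hle

lemma smul_one_sub_posSemidef {M : Matrix (Fin n) (Fin n) ℂ} (hM : M.IsHermitian) :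
    (((eigDesc hM 0 : ℝ) : ℂ) • 1 - M).PosSemidef := by
  have hs : M = (hM.eigenvectorUnitary : Matrix (Fin n) (Fin n) ℂ) * diagonal (RCLike.ofReal ∘ hM.eigenvalues) * star (hM.eigenvectorUnitary : Matrix (Fin n) (Fin n) ℂ) := hM.spectral_theorem
  set U : Matrix (Fin n) (Fin n) ℂ := (hM.eigenvectorUnitary : Matrix (Fin n) (Fin n) ℂ) with hUdef
  have hU : U * star U = 1 := (Matrix.mem_unitaryGroup_iff).mp hM.eigenvectorUnitary.2
  have h1 : (eigDesc hM 0 : ℂ) • (1 : Matrix (Fin n) (Fin n) ℂ) = U * ((eigDesc hM 0 : ℂ) • 1) * star U := by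
    rw [Matrix.mul_smul, Matrix.smul_mul, mul_one, hU]
  have key : ((eigDesc hM 0 : ℂ) • 1 - M) =
      U * diagonal (fun i => ((eigDesc hM 0 - hM.eigenvalues i : ℝ) : ℂ)) * star U := by
    calc ((eigDesc hM 0 : ℂ) • 1 - M)
        = U * ((eigDesc hM 0 : ℂ) • 1) * star U
          - U * diagonal (RCLike.ofReal ∘ hM.eigenvalues) * star U := by rw [← hs, ← h1]
      _ = U * diagonal (fun i => ((eigDesc hM 0 - hM.eigenvalues i : ℝ) : ℂ)) * star U := by
          rw [← Matrix.sub_mul, ← Matrix.mul_sub]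
          congr 2
          rw [smul_one_eq_diagonal, Matrix.diagonal_sub]
          congr 1
          ext i
          push_cast
          simp
  rw [key]
  exact Matrix.PosSemidef.mul_mul_conjTranspose_same
    (Matrix.posSemidef_diagonal_iff.mpr (fun i => by
      rw [← Complex.ofReal_zero, Complex.real_le_real, sub_nonneg]
      exact eig_le_eigDesc hM i)) U

lemma rayleigh_le {M : Matrix (Fin n) (Fin n) ℂ} (hM : M.IsHermitian) (x : Fin n → ℂ) :
    (star x ⬝ᵥ (M *ᵥ x)).re ≤ eigDesc hM 0 * ∑ i, ‖x i‖^2 := by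
  have h := (smul_one_sub_posSemidef hM).dotProduct_mulVec_nonneg x
  rw [Complex.le_def] at h
  have hexp : (((eigDesc hM 0 : ℝ) : ℂ) • 1 - M) *ᵥ x = (eigDesc hM 0 : ℂ) • x - M *ᵥ x := by
    rw [Matrix.sub_mulVec, Matrix.smul_mulVec, Matrix.one_mulVec]
  rw [hexp, dotProduct_sub, dotProduct_smul, dot_self_eq] at h
  have := h.1
  simp only [Complex.zero_re, Complex.sub_re, smul_eq_mul, ← Complex.ofReal_mul,
    Complex.ofReal_re] at this
  linarith

lemma exists_top_eigenvector {M : Matrix (Fin n) (Fin n) ℂ} (hM : M.IsHermitian) :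
    ∃ φ : Fin n → ℂ, (∑ i, ‖φ i‖ ^ 2 = 1) ∧ M *ᵥ φ = ((eigDesc hM 0 : ℝ) : ℂ) • φ := by
  set j0 := Tuple.sort hM.eigenvalues (Fin.rev 0) with hj0
  refine ⟨⇑(hM.eigenvectorBasis j0), ?_, ?_⟩
  · have hnorm : ‖hM.eigenvectorBasis j0‖ = 1 := hM.eigenvectorBasis.orthonormal.1 j0
    have := EuclideanSpace.norm_eq (hM.eigenvectorBasis j0)
    rw [hnorm] at this
    have h2 : (0:ℝ) ≤ ∑ i, ‖(hM.eigenvectorBasis j0) i‖ ^ 2 :=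
      Finset.sum_nonneg fun i _ => sq_nonneg _
    nlinarith [Real.sq_sqrt h2]
  · have := hM.mulVec_eigenvectorBasis j0
    rw [this]
    funext i
    simp only [Pi.smul_apply, Complex.real_smul, smul_eq_mul]
    norm_num
    exact Or.inl rfl

lemma dot_unit {φ : Fin n → ℂ} (hφ : ∑ i, ‖φ i‖ ^ 2 = 1) : star φ ⬝ᵥ φ = 1 := by
  rw [dot_self_eq, hφ]; norm_num

lemma quad_of_eigen {M : Matrix (Fin n) (Fin n) ℂ} {φ : Fin n → ℂ} {r : ℝ}
    (hφ : ∑ i, ‖φ i‖ ^ 2 = 1) (h : M *ᵥ φ = ((r : ℝ) : ℂ) • φ) :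
    star φ ⬝ᵥ (M *ᵥ φ) = ((r : ℝ) : ℂ) := by
  rw [h, dotProduct_smul, dot_unit hφ, smul_eq_mul, mul_one]

lemma top_le_one {M : Matrix (Fin n) (Fin n) ℂ} (hM : M.IsHermitian)
    (h1 : ((1 : Matrix (Fin n) (Fin n) ℂ) - M).PosSemidef) : eigDesc hM 0 ≤ 1 := by
  obtain ⟨φ, hφ1, hφ2⟩ := exists_top_eigenvector hM
  have h := h1.dotProduct_mulVec_nonneg φ
  rw [Complex.le_def] at h
  have hexp : ((1 : Matrix (Fin n) (Fin n) ℂ) - M) *ᵥ φ = φ - M *ᵥ φ := by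
    rw [Matrix.sub_mulVec, Matrix.one_mulVec]
  rw [hexp, dotProduct_sub, dot_unit hφ1, quad_of_eigen hφ1 hφ2] at h
  have := h.1
  simp only [Complex.zero_re, Complex.sub_re, Complex.one_re, Complex.ofReal_re] at this
  linarith

lemma sq_smul_sub_posSemidef {A : Matrix (Fin n) (Fin n) ℂ} (hA : A.PosSemidef) (r : ℝ)
    (hr : (((r : ℝ) : ℂ) • 1 - A).PosSemidef) :
    (((r : ℝ) : ℂ) • A - A * A).PosSemidef := by
  obtain ⟨S, hS, hsq⟩ : ∃ S : Matrix (Fin n) (Fin n) ℂ, S.PosSemidef ∧ S * S = A :=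
    by open scoped MatrixOrder in exact ⟨CFC.sqrt A, (CFC.sqrt_nonneg A).posSemidef, CFC.sqrt_mul_sqrt_self A hA.nonneg⟩
  have h1 : S * (((r : ℝ) : ℂ) • 1 - A) * Sᴴ = ((r : ℝ) : ℂ) • A - A * A := by
    rw [hS.1.eq, ← hsq, Matrix.mul_sub, Matrix.sub_mul, Matrix.mul_smul, mul_one,
      Matrix.smul_mul]
    congr 1
    simp only [mul_assoc]
  exact h1 ▸ hr.mul_mul_conjTranspose_same S

lemma quad_le_one {M : Matrix (Fin n) (Fin n) ℂ}
    (hM1 : ((1 : Matrix (Fin n) (Fin n) ℂ) - M).PosSemidef) {φ : Fin n → ℂ}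
    (hφ : ∑ i, ‖φ i‖ ^ 2 = 1) : (star φ ⬝ᵥ (M *ᵥ φ)).re ≤ 1 := by
  have h := hM1.dotProduct_mulVec_nonneg φ
  rw [Complex.le_def] at h
  have hexp : ((1 : Matrix (Fin n) (Fin n) ℂ) - M) *ᵥ φ = φ - M *ᵥ φ := by
    rw [Matrix.sub_mulVec, Matrix.one_mulVec]
  rw [hexp, dotProduct_sub, dot_unit hφ] at h
  have := h.1
  simp only [Complex.zero_re, Complex.sub_re, Complex.one_re] at this
  linarith

lemma expand_dot {φ : Fin n → ℂ} (hφ : ∑ i, ‖φ i‖ ^ 2 = 1) (x y : Fin n → ℂ) (c d : ℝ)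
    (hx : star x ⬝ᵥ φ = ((c : ℝ) : ℂ)) (hy : star φ ⬝ᵥ y = ((d : ℝ) : ℂ)) :
    star (x - ((c : ℝ) : ℂ) • φ) ⬝ᵥ (y - ((d : ℝ) : ℂ) • φ) =
      star x ⬝ᵥ y - ((c * d : ℝ) : ℂ) := by
  rw [star_sub, star_smul, sub_dotProduct, dotProduct_sub, dotProduct_sub,
    smul_dotProduct, smul_dotProduct, dotProduct_smul, dotProduct_smul,
    hy, hx, dot_unit hφ]
  simp only [smul_eq_mul, star_trivial, Complex.star_def, Complex.conj_ofReal]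
  push_cast
  ring

lemma real_part (t lA lB a b c sA sB m lC : ℝ)
    (ht0 : 0 < t) (ht1 : t < 1)
    (ha0 : 0 ≤ a) (hb0 : 0 ≤ b) (ha1 : a ≤ 1) (hb1 : b ≤ 1)
    (halA : a ≤ lA) (hblB : b ≤ lB) (hlA1 : lA ≤ 1) (hlB1 : lB ≤ 1)
    (hc0 : 0 ≤ c) (hc2 : c ^ 2 = t * (1 - t))
    (hsA0 : 0 ≤ sA) (hsB0 : 0 ≤ sB)
    (hsA2 : sA ^ 2 = a * (lA - a)) (hsB2 : sB ^ 2 = b * (lB - b))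
    (him : |m| ≤ sA * sB)
    (hmain : lC = t * a + (1 - t) * b - 2 * c * m) :
    lC ≤ t * lA + (1 - t) * lB ∧ (lC = t * lA + (1 - t) * lB → lA = a ∧ lB = b) := by
  have hab1 : a * b ≤ 1 := by nlinarith
  have hRsq : (2 * c * sA * sB) ^ 2 = 4 * (t * (1 - t)) * (a * (lA - a)) * (b * (lB - b)) := by
    have h : (2 * c * sA * sB) ^ 2 = 4 * c ^ 2 * sA ^ 2 * sB ^ 2 := by ring
    rw [h, hc2, hsA2, hsB2]
  have hfac : 0 ≤ (t * (lA - a)) * ((1 - t) * (lB - b)) :=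
    mul_nonneg (mul_nonneg ht0.le (by linarith)) (mul_nonneg (by linarith) (by linarith))
  have hx0 : 0 ≤ 2 * c * sA * sB := by positivity
  have hy0 : 0 ≤ t * (lA - a) + (1 - t) * (lB - b) := by
    have h1 := mul_nonneg ht0.le (sub_nonneg.2 halA)
    have h2 := mul_nonneg (by linarith : (0:ℝ) ≤ 1 - t) (sub_nonneg.2 hblB)
    linarith
  have hR : 2 * c * sA * sB ≤ t * (lA - a) + (1 - t) * (lB - b) := by
    have h1 : (2 * c * sA * sB) ^ 2 ≤ (t * (lA - a) + (1 - t) * (lB - b)) ^ 2 := by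
      rw [hRsq]
      nlinarith [sq_nonneg (t * (lA - a) - (1 - t) * (lB - b)), hfac,
        mul_nonneg (mul_nonneg ht0.le (by linarith : (0:ℝ) ≤ 1 - t))
          (mul_nonneg (by linarith : (0:ℝ) ≤ lA - a) (by linarith : (0:ℝ) ≤ lB - b))]
    calc 2 * c * sA * sB = Real.sqrt ((2 * c * sA * sB) ^ 2) := (Real.sqrt_sq hx0).symm
      _ ≤ Real.sqrt ((t * (lA - a) + (1 - t) * (lB - b)) ^ 2) := Real.sqrt_le_sqrt h1
      _ = t * (lA - a) + (1 - t) * (lB - b) := Real.sqrt_sq hy0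
  have h2 : -m ≤ sA * sB := le_trans (neg_le_abs m) him
  have h3 : -(2 * c * m) ≤ 2 * c * sA * sB := by nlinarith
  constructor
  · nlinarith
  intro heq
  set P := t * (lA - a) with hP
  set Q := (1 - t) * (lB - b) with hQ
  have hP0 : 0 ≤ P := mul_nonneg ht0.le (by linarith)
  have hQ0 : 0 ≤ Q := mul_nonneg (by linarith) (by linarith)
  have hsum : P + Q ≤ 2 * c * sA * sB := by
    have : P + Q = -(2 * c * m) := by linear_combination hmain - heq
    linarith
  have hsq : (P + Q) ^ 2 ≤ 4 * (a * b) * (P * Q) := by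
    have h1 : (P + Q) ^ 2 ≤ (2 * c * sA * sB) ^ 2 := by nlinarith
    rw [hRsq] at h1
    calc (P + Q) ^ 2 ≤ 4 * (t * (1 - t)) * (a * (lA - a)) * (b * (lB - b)) := h1
      _ = 4 * (a * b) * (P * Q) := by rw [hP, hQ]; ring
  have hPeQ : P = Q := by nlinarith [sq_nonneg (P - Q), hfac]
  have hPzero : P = 0 := by
    by_contra hne
    have hPpos : 0 < P := lt_of_le_of_ne hP0 (Ne.symm hne)
    have hab : 1 ≤ a * b := by
      rw [← hPeQ] at hsq
      nlinarith [mul_pos hPpos hPpos]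
    have ha1' : 1 ≤ a := by nlinarith
    have hgt : a < lA := by rw [hP] at hPpos; nlinarith
    linarith
  have hQzero : Q = 0 := by rw [← hPeQ]; exact hPzero
  constructor
  · rw [hP] at hPzero
    rcases mul_eq_zero.mp hPzero with h | h
    · linarith
    · linarith
  · rw [hQ] at hQzero
    rcases mul_eq_zero.mp hQzero with h | h
    · linarith
    · linarith

lemma key_lemma (t : ℝ) (ht : t ∈ Set.Ioo (0:ℝ) 1) (A B : Matrix (Fin n) (Fin n) ℂ)
    (hA : A.PosSemidef) (hB : B.PosSemidef)
    (hA1 : ((1 : Matrix (Fin n) (Fin n) ℂ) - A).PosSemidef)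
    (hB1 : ((1 : Matrix (Fin n) (Fin n) ℂ) - B).PosSemidef)
    (φ : Fin n → ℂ) (hφ : ∑ i, ‖φ i‖^2 = 1) (lC : ℝ)
    (hCφ : pswap t A B *ᵥ φ = ((lC : ℝ) : ℂ) • φ) :
    lC ≤ t * eigDesc hA.1 0 + (1-t) * eigDesc hB.1 0 ∧
      (lC = t * eigDesc hA.1 0 + (1-t) * eigDesc hB.1 0 →
        A *ᵥ φ = ((eigDesc hA.1 0 : ℝ) : ℂ) • φ ∧
        B *ᵥ φ = ((eigDesc hB.1 0 : ℝ) : ℂ) • φ) := by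
  obtain ⟨ht0, ht1⟩ := ht
  set lA := eigDesc hA.1 0 with hlA
  set lB := eigDesc hB.1 0 with hlB
  set a := (star φ ⬝ᵥ (A *ᵥ φ)).re with ha
  set b := (star φ ⬝ᵥ (B *ᵥ φ)).re with hb
  have haeq : star φ ⬝ᵥ (A *ᵥ φ) = ((a : ℝ) : ℂ) := (psd_dot hA φ).1
  have hbeq : star φ ⬝ᵥ (B *ᵥ φ) = ((b : ℝ) : ℂ) := (psd_dot hB φ).1
  have ha0 : 0 ≤ a := (psd_dot hA φ).2
  have hb0 : 0 ≤ b := (psd_dot hB φ).2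
  have ha1 : a ≤ 1 := quad_le_one hA1 hφ
  have hb1 : b ≤ 1 := quad_le_one hB1 hφ
  have halA : a ≤ lA := by have := rayleigh_le hA.1 φ; rw [hφ, mul_one] at this; exact this
  have hblB : b ≤ lB := by have := rayleigh_le hB.1 φ; rw [hφ, mul_one] at this; exact this
  have hlA1 : lA ≤ 1 := top_le_one hA.1 hA1
  have hlB1 : lB ≤ 1 := top_le_one hB.1 hB1
  -- star(Aφ)⬝ᵥφ = a etc.
  have haφ : star (A *ᵥ φ) ⬝ᵥ φ = ((a : ℝ) : ℂ) := by rw [← herm_dot hA.1, haeq]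
  have hbφ : star (B *ᵥ φ) ⬝ᵥ φ = ((b : ℝ) : ℂ) := by rw [← herm_dot hB.1, hbeq]
  set u := A *ᵥ φ - ((a : ℝ) : ℂ) • φ with hu
  set v := B *ᵥ φ - ((b : ℝ) : ℂ) • φ with hv
  set z := star u ⬝ᵥ v with hzdef
  have hz : z = star (A *ᵥ φ) ⬝ᵥ (B *ᵥ φ) - ((a * b : ℝ) : ℂ) :=
    expand_dot hφ _ _ a b haφ hbeq
  have hz' : star v ⬝ᵥ u = star (B *ᵥ φ) ⬝ᵥ (A *ᵥ φ) - ((b * a : ℝ) : ℂ) :=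
    expand_dot hφ _ _ b a hbφ haeq
  have hzconj : star v ⬝ᵥ u = (starRingEnd ℂ) z := by rw [← conj_dot u v]; rfl
  -- norms
  have hNu_eq : star u ⬝ᵥ u = star (A *ᵥ φ) ⬝ᵥ (A *ᵥ φ) - ((a * a : ℝ) : ℂ) :=
    expand_dot hφ _ _ a a haφ haeq
  have hNv_eq : star v ⬝ᵥ v = star (B *ᵥ φ) ⬝ᵥ (B *ᵥ φ) - ((b * b : ℝ) : ℂ) :=
    expand_dot hφ _ _ b b hbφ hbeq
  set Nu := (star u ⬝ᵥ u).re with hNu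
  set Nv := (star v ⬝ᵥ v).re with hNv
  have hNu0 : 0 ≤ Nu := by rw [hNu, dot_self_re]; positivity
  have hNv0 : 0 ≤ Nv := by rw [hNv, dot_self_re]; positivity
  -- Nu ≤ a (lA - a)
  have hNu_le : Nu ≤ a * (lA - a) := by
    have hps := sq_smul_sub_posSemidef hA lA (smul_one_sub_posSemidef hA.1)
    have h := (psd_dot hps φ).2
    have hexp : (((lA : ℝ) : ℂ) • A - A * A) *ᵥ φ =
        ((lA : ℝ) : ℂ) • (A *ᵥ φ) - A *ᵥ (A *ᵥ φ) := by
      rw [Matrix.sub_mulVec, Matrix.smul_mulVec, ← Matrix.mulVec_mulVec]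
    rw [hexp, dotProduct_sub, dotProduct_smul, haeq, herm_dot hA.1] at h
    simp only [smul_eq_mul, Complex.sub_re, ← Complex.ofReal_mul, Complex.ofReal_re] at h
    have h2 : (star (A *ᵥ φ) ⬝ᵥ (A *ᵥ φ)).re = Nu + a * a := by
      rw [hNu, hNu_eq]
      simp [Complex.sub_re]
    rw [h2] at h
    nlinarith
  have hNv_le : Nv ≤ b * (lB - b) := by
    have hps := sq_smul_sub_posSemidef hB lB (smul_one_sub_posSemidef hB.1)
    have h := (psd_dot hps φ).2
    have hexp : (((lB : ℝ) : ℂ) • B - B * B) *ᵥ φ =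
        ((lB : ℝ) : ℂ) • (B *ᵥ φ) - B *ᵥ (B *ᵥ φ) := by
      rw [Matrix.sub_mulVec, Matrix.smul_mulVec, ← Matrix.mulVec_mulVec]
    rw [hexp, dotProduct_sub, dotProduct_smul, hbeq, herm_dot hB.1] at h
    simp only [smul_eq_mul, Complex.sub_re, ← Complex.ofReal_mul, Complex.ofReal_re] at h
    have h2 : (star (B *ᵥ φ) ⬝ᵥ (B *ᵥ φ)).re = Nv + b * b := by
      rw [hNv, hNv_eq]
      simp [Complex.sub_re]
    rw [h2] at h
    nlinarith
  -- main scalar identity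
  set c := Real.sqrt (t * (1 - t)) with hc
  have hc0 : 0 ≤ c := Real.sqrt_nonneg _
  have hc2 : c ^ 2 = t * (1 - t) := Real.sq_sqrt (by nlinarith)
  have hq : star φ ⬝ᵥ (pswap t A B *ᵥ φ) = ((lC : ℝ) : ℂ) := quad_of_eigen hφ hCφ
  have hmain : lC = t * a + (1 - t) * b - 2 * c * z.im := by
    have hexp : pswap t A B *ᵥ φ =
        (t : ℂ) • (A *ᵥ φ) + ((1 - t : ℝ) : ℂ) • (B *ᵥ φ)
          + (Complex.I * (c : ℂ)) • (A *ᵥ (B *ᵥ φ) - B *ᵥ (A *ᵥ φ)) := by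
      rw [pswap]
      rw [Matrix.add_mulVec, Matrix.add_mulVec, Matrix.smul_mulVec,
        Matrix.smul_mulVec, Matrix.smul_mulVec, Matrix.sub_mulVec,
        ← Matrix.mulVec_mulVec, ← Matrix.mulVec_mulVec]
    have e1 : star φ ⬝ᵥ (A *ᵥ (B *ᵥ φ)) = star (A *ᵥ φ) ⬝ᵥ (B *ᵥ φ) := herm_dot hA.1 φ _
    have e2 : star φ ⬝ᵥ (B *ᵥ (A *ᵥ φ)) = star (B *ᵥ φ) ⬝ᵥ (A *ᵥ φ) := herm_dot hB.1 φ _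
    rw [hexp, dotProduct_add, dotProduct_add, dotProduct_smul,
      dotProduct_smul, dotProduct_smul, dotProduct_sub,
      e1, e2, haeq, hbeq] at hq
    have hw : star (A *ᵥ φ) ⬝ᵥ (B *ᵥ φ) - star (B *ᵥ φ) ⬝ᵥ (A *ᵥ φ)
        = z - (starRingEnd ℂ) z := by
      rw [← hzconj, hz, hz']
      push_cast
      ring
    rw [hw, Complex.sub_conj] at hq
    have hre : ((t * a + (1 - t) * b - 2 * c * z.im : ℝ) : ℂ) = ((lC : ℝ) : ℂ) := by
      rw [← hq]
      simp only [smul_eq_mul]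
      push_cast
      linear_combination (-2 * (c:ℂ) * (z.im:ℂ)) * Complex.I_sq
    exact_mod_cast hre.symm
  -- apply the real lemma
  set sA := Real.sqrt (a * (lA - a)) with hsA
  set sB := Real.sqrt (b * (lB - b)) with hsB
  have hsA0 : 0 ≤ sA := Real.sqrt_nonneg _
  have hsB0 : 0 ≤ sB := Real.sqrt_nonneg _
  have hsA2 : sA ^ 2 = a * (lA - a) := Real.sq_sqrt (mul_nonneg ha0 (by linarith))
  have hsB2 : sB ^ 2 = b * (lB - b) := Real.sq_sqrt (mul_nonneg hb0 (by linarith))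
  have hzn : ‖z‖ ≤ sA * sB := by
    refine le_trans (cs_dot u v) ?_
    exact mul_le_mul (Real.sqrt_le_sqrt hNu_le) (Real.sqrt_le_sqrt hNv_le)
      (Real.sqrt_nonneg _) hsA0
  have him : |z.im| ≤ sA * sB := by
    refine le_trans ?_ hzn
    exact Complex.abs_im_le_norm z
  obtain ⟨hineq, heqcase⟩ := real_part t lA lB a b c sA sB z.im lC ht0 ht1 ha0 hb0 ha1 hb1
    halA hblB hlA1 hlB1 hc0 hc2 hsA0 hsB0 hsA2 hsB2 him hmain
  refine ⟨hineq, fun heq => ?_⟩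
  obtain ⟨haA, hbB⟩ := heqcase heq
  have hvanish : ∀ (w : Fin n → ℂ), (star w ⬝ᵥ w).re = 0 → w = 0 := by
    intro w hw
    rw [dot_self_re] at hw
    funext i
    have hnn : ∀ j ∈ Finset.univ, (0:ℝ) ≤ ‖w j‖ ^ 2 := fun j _ => sq_nonneg _
    have h0 := (Finset.sum_eq_zero_iff_of_nonneg hnn).mp hw i (Finset.mem_univ i)
    have : ‖w i‖ = 0 := sq_eq_zero_iff.mp h0
    simpa using this
  have hNu_zero : Nu = 0 := le_antisymm (by rw [← haA] at hNu_le; simpa using hNu_le) hNu0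
  have hNv_zero : Nv = 0 := le_antisymm (by rw [← hbB] at hNv_le; simpa using hNv_le) hNv0
  have huz : u = 0 := hvanish u hNu_zero
  have hvz : v = 0 := hvanish v hNv_zero
  rw [hu] at huz
  rw [hv] at hvz
  constructor
  · rw [haA]
    exact sub_eq_zero.mp huz
  · rw [hbB]
    exact sub_eq_zero.mp hvz


theorem stmt_3 {n : ℕ} [NeZero n] (t : ℝ) (ht : t ∈ Set.Ioo (0 : ℝ) 1)
    (A B : Matrix (Fin n) (Fin n) ℂ)
    (hA : A.PosSemidef) (hB : B.PosSemidef)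
    (hA1 : (1 - A).PosSemidef) (hB1 : (1 - B).PosSemidef)
    (hC : (pswap t A B).IsHermitian) :
    eigDesc hC 0 = t * eigDesc hA.isHermitian 0 + (1 - t) * eigDesc hB.isHermitian 0 ↔
      ∃ φ : Fin n → ℂ, (∑ i, ‖φ i‖ ^ 2 = 1) ∧
        A *ᵥ φ = (eigDesc hA.isHermitian 0 : ℂ) • φ ∧
        B *ᵥ φ = (eigDesc hB.isHermitian 0 : ℂ) • φ := by
  constructor
  · intro heq
    obtain ⟨φ, hφ1, hφ2⟩ := exists_top_eigenvector hC
    obtain ⟨_, h2⟩ := key_lemma t ht A B hA hB hA1 hB1 φ hφ1 (eigDesc hC 0) hφ2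
    exact ⟨φ, hφ1, h2 heq⟩
  · rintro ⟨φ, hφ1, hφA, hφB⟩
    set lA := eigDesc hA.isHermitian 0 with hlA
    set lB := eigDesc hB.isHermitian 0 with hlB
    set c := Real.sqrt (t * (1 - t)) with hc
    have hexp : pswap t A B *ᵥ φ =
        (t : ℂ) • (A *ᵥ φ) + ((1 - t : ℝ) : ℂ) • (B *ᵥ φ)
          + (Complex.I * (c : ℂ)) • (A *ᵥ (B *ᵥ φ) - B *ᵥ (A *ᵥ φ)) := by
      rw [pswap]
      rw [Matrix.add_mulVec, Matrix.add_mulVec, Matrix.smul_mulVec,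
        Matrix.smul_mulVec, Matrix.smul_mulVec, Matrix.sub_mulVec,
        ← Matrix.mulVec_mulVec, ← Matrix.mulVec_mulVec]
    have hCφ : pswap t A B *ᵥ φ = (((t * lA + (1 - t) * lB : ℝ)) : ℂ) • φ := by
      rw [hexp, hφB, Matrix.mulVec_smul, hφA, Matrix.mulVec_smul, hφB]
      funext i
      simp only [Pi.add_apply, Pi.smul_apply, Pi.sub_apply, smul_eq_mul]
      push_cast
      ring
    have h1 : t * lA + (1 - t) * lB ≤ eigDesc hC 0 := by
      have hr := rayleigh_le hC φ
      rw [hφ1, mul_one, quad_of_eigen hφ1 hCφ] at hr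
      simpa using hr
    have h2 : eigDesc hC 0 ≤ t * lA + (1 - t) * lB := by
      obtain ⟨ψ, hψ1, hψ2⟩ := exists_top_eigenvector hC
      exact (key_lemma t ht A B hA hB hA1 hB1 ψ hψ1 (eigDesc hC 0) hψ2).1
    linarith
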